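/- Let n ≥ 1 be a natural number and define on [0,1] the continuous piecewise-linear function β by β(x) = x/2 for x ≤ n/(n+2), β(x) = n/(2(n+2)) + (4/5)(x − n/(n+2)) for n/(n+2) < x ≤ (n+1)/(n+2), and β(x) = n/(2(n+2)) + 4/(5(n+2)) + (1/5)(x − (n+1)/(n+2)) for (n+1)/(n+2) < x ≤ 1. Then with β*(x) = x/2, the integral ∫₀¹ ((x − β(x))/β'(x) − x)·(β(x) − β*(x)) dx is strictly positive. -/

import Mathlib

open MeasureTheory Set

/-- The piecewise-linear deviation strategy, parametrized by `n`. -/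
noncomputable def minty_beta (n : ℕ) (x : ℝ) : ℝ :=
  if x ≤ n / (n + 2) then x / 2
  else if x ≤ (n + 1) / (n + 2) then n / (2 * (n + 2)) + (4/5) * (x - n / (n + 2))
  else n / (2 * (n + 2)) + 4 / (5 * (n + 2)) + (1/5) * (x - (n + 1) / (n + 2))

/-- Its piecewise derivative. -/
noncomputable def minty_beta' (n : ℕ) (x : ℝ) : ℝ :=
  if x ≤ n / (n + 2) then 1/2
  else if x ≤ (n + 1) / (n + 2) then 4/5
  else 1/5

lemma integral_quad (p q r a b : ℝ) :
    ∫ x in a..b, (p + q*x + r*x^2) =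
      (p*b + q*b^2/2 + r*b^3/3) - (p*a + q*a^2/2 + r*a^3/3) := by
  have h : ∀ x ∈ Set.uIcc a b,
      HasDerivAt (fun x => p*x + q*x^2/2 + r*x^3/3) (p + q*x + r*x^2) x := by
    intro x _
    have h2 := (hasDerivAt_id x).const_mul p
    have h3 := ((hasDerivAt_pow 2 x).const_mul q).div_const 2
    have h4 := ((hasDerivAt_pow 3 x).const_mul r).div_const 3
    exact ((h2.add h3).add h4).congr_deriv (by simp; ring)
  rw [intervalIntegral.integral_eq_sub_of_hasDerivAt h
    ((by fun_prop : Continuous fun x : ℝ => p + q*x + r*x^2).intervalIntegrable a b)]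

set_option maxHeartbeats 1600000 in
theorem first_price_minty_violated (n : ℕ) (hn : 1 ≤ n) :
    0 < ∫ x in (0:ℝ)..1,
      ((x - minty_beta n x) / minty_beta' n x - x) * (minty_beta n x - x / 2) := by
  have hN : (1:ℝ) ≤ (n:ℝ) := by exact_mod_cast hn
  set N : ℝ := (n:ℝ) with hNdef
  have hD : (0:ℝ) < N + 2 := by linarith
  set A : ℝ := N / (N + 2) with hAdef
  set B : ℝ := (N + 1) / (N + 2) with hBdef
  have h0A : 0 ≤ A := div_nonneg (by linarith) hD.le
  have hAB : A ≤ B := by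
    rw [div_le_div_iff₀ hD hD]; nlinarith
  have hB1 : B < 1 := by rw [div_lt_one hD]; linarith
  set p2 : ℝ := -(9/80)*A^2 with hp2
  set q2 : ℝ := (27/80)*A with hq2
  set r2 : ℝ := -(9/40) with hr2
  set p3 : ℝ := -(9/5)*B^2 + (9/5)*A*B - (9/20)*A^2 with hp3
  set q3 : ℝ := (27/10)*B - (27/20)*A with hq3
  set r3 : ℝ := -(9/10) with hr3
  set g : ℝ → ℝ := fun x => if x ≤ A then 0 else if x ≤ B then p2 + q2*x + r2*x^2
      else p3 + q3*x + r3*x^2 with hg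
  have key : ∀ x : ℝ, ((x - minty_beta n x) / minty_beta' n x - x) * (minty_beta n x - x / 2)
      = g x := by
    intro x
    simp only [minty_beta, minty_beta', hg, ← hNdef, ← hAdef, ← hBdef]
    split_ifs with h1 h2
    · ring
    · rw [hp2, hq2, hr2, hAdef]; field_simp; ring
    · rw [hp3, hq3, hr3, hAdef, hBdef]; field_simp; ring
  rw [intervalIntegral.integral_congr (fun x _ => key x)]
  -- integrability
  have hc2 : Continuous fun x : ℝ => p2 + q2*x + r2*x^2 := by fun_prop
  have hc3 : Continuous fun x : ℝ => p3 + q3*x + r3*x^2 := by fun_prop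
  have hi1 : IntervalIntegrable g volume 0 A := by
    rw [intervalIntegrable_iff_integrableOn_Ioc_of_le h0A]
    apply (integrableOn_const (C := (0:ℝ)) measure_Ioc_lt_top.ne).congr_fun
      _ measurableSet_Ioc
    intro x hx
    simp [hg, hx.2]
  have hi2 : IntervalIntegrable g volume A B := by
    rw [intervalIntegrable_iff_integrableOn_Ioc_of_le hAB]
    apply (hc2.integrableOn_Ioc).congr_fun _ measurableSet_Ioc
    intro x hx
    simp [hg, not_le.mpr hx.1, hx.2]
  have hi3 : IntervalIntegrable g volume B 1 := by
    rw [intervalIntegrable_iff_integrableOn_Ioc_of_le hB1.le]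
    apply (hc3.integrableOn_Ioc).congr_fun _ measurableSet_Ioc
    intro x hx
    have hxA : ¬ x ≤ A := not_le.mpr (lt_of_le_of_lt hAB hx.1)
    simp [hg, hxA, not_le.mpr hx.1]
  rw [← intervalIntegral.integral_add_adjacent_intervals (hi1.trans hi2) hi3,
      ← intervalIntegral.integral_add_adjacent_intervals hi1 hi2]
  have v1 : ∫ x in (0:ℝ)..A, g x = 0 := by
    rw [intervalIntegral.integral_congr (g := fun _ => (0:ℝ)) ?_, intervalIntegral.integral_const]
    · simp
    · intro x hx
      rw [Set.uIcc_of_le h0A] at hx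
      simp [hg, hx.2]
  have v2 : ∫ x in A..B, g x
      = (p2*B + q2*B^2/2 + r2*B^3/3) - (p2*A + q2*A^2/2 + r2*A^3/3) := by
    rw [intervalIntegral.integral_congr (g := fun x => p2 + q2*x + r2*x^2) ?_, integral_quad]
    intro x hx
    rw [Set.uIcc_of_le hAB] at hx
    by_cases h1 : x ≤ A
    · have hxA : x = A := le_antisymm h1 hx.1
      subst hxA
      simp only [hg, le_refl, if_true, hp2, hq2, hr2]
      ring
    · simp [hg, h1, hx.2]
  have v3 : ∫ x in B..(1:ℝ), g x
      = (p3*1 + q3*1^2/2 + r3*1^3/3) - (p3*B + q3*B^2/2 + r3*B^3/3) := by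
    rw [intervalIntegral.integral_congr_ae (g := fun x => p3 + q3*x + r3*x^2) ?_, integral_quad]
    filter_upwards with x hx
    rw [Set.uIoc_of_le hB1.le] at hx
    have hxA : ¬ x ≤ A := not_le.mpr (lt_of_le_of_lt hAB hx.1)
    simp [hg, hxA, not_le.mpr hx.1]
  rw [v1, v2, v3]
  have hval : 0 + ((p2*B + q2*B^2/2 + r2*B^3/3) - (p2*A + q2*A^2/2 + r2*A^3/3))
      + ((p3*1 + q3*1^2/2 + r3*1^3/3) - (p3*B + q3*B^2/2 + r3*B^3/3))
      = (27*N + 12) / (160*(N+2)^3) := by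
    rw [hp2, hq2, hr2, hp3, hq3, hr3, hAdef, hBdef]
    field_simp
    ring
  rw [hval]
  apply div_pos (by linarith) (by positivity)
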